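/- Two distinct finitely supported maps f, g : F_n → F whose supports have admissible convex hulls (barycentre at e or at an edge [e,a_i]) lie in distinct F_n-orbits under the left translation action. -/

import Mathlib

/-- The Cayley graph of the free group `F_n` with respect to the free generators. -/
def Cayley (n : ℕ) : SimpleGraph (FreeGroup (Fin n)) where
  Adj x y := x ≠ y ∧ ∃ i : Fin n, y = x * FreeGroup.of i ∨ x = y * FreeGroup.of i
  symm := ⟨by
    rintro x y ⟨h, i, hi⟩
    exact ⟨h.symm, i, hi.symm⟩⟩
  loopless := ⟨by rintro x ⟨h, -⟩; exact h rfl⟩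

/-- The convex hull of a set of vertices in the Cayley tree: the set of vertices
lying on a geodesic between two points of the set. -/
def cayleyHull (n : ℕ) (S : Set (FreeGroup (Fin n))) : Set (FreeGroup (Fin n)) :=
  {v | ∃ a ∈ S, ∃ b ∈ S,
    (Cayley n).dist a v + (Cayley n).dist v b = (Cayley n).dist a b}

/-- Eccentricity of a vertex relative to a set of vertices. -/
noncomputable def cayleyEcc (n : ℕ) (S : Set (FreeGroup (Fin n)))
    (v : FreeGroup (Fin n)) : ℕ :=
  sSup ((fun u => (Cayley n).dist v u) '' S)

/-- The barycentre of a finite subtree `S` of the Cayley tree (the vertex or the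
pair of adjacent vertices left after repeatedly deleting terminal vertices),
realised as the set of vertices of `S` of minimal eccentricity. -/
def cayleyBarycentre (n : ℕ) (S : Set (FreeGroup (Fin n))) : Set (FreeGroup (Fin n)) :=
  {v ∈ S | ∀ u ∈ S, cayleyEcc n S v ≤ cayleyEcc n S u}

/-- Left multiplication is an automorphism of the Cayley graph. -/
def cayleyMulIso (n : ℕ) (w : FreeGroup (Fin n)) : Cayley n ≃g Cayley n where
  toEquiv := Equiv.mulLeft w
  map_rel_iff' := by
    intro x y
    simp only [Equiv.coe_mulLeft, Cayley, ne_eq, mul_right_inj, mul_assoc]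

lemma edist_hom {V V' : Type*} {G : SimpleGraph V} {G' : SimpleGraph V'}
    (φ : G →g G') (a b : V) : G'.edist (φ a) (φ b) ≤ G.edist a b := by
  rw [SimpleGraph.edist_eq_sInf (G := G)]
  apply le_sInf
  rintro _ ⟨p, rfl⟩
  calc G'.edist (φ a) (φ b) ≤ (p.map φ).length := SimpleGraph.edist_le _
    _ = (p.length : ℕ∞) := by rw [SimpleGraph.Walk.length_map]

lemma cayley_dist_mul (n : ℕ) (w a b : FreeGroup (Fin n)) :
    (Cayley n).dist (w * a) (w * b) = (Cayley n).dist a b := by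
  have h1 : (Cayley n).edist (w * a) (w * b) ≤ (Cayley n).edist a b :=
    edist_hom (cayleyMulIso n w).toHom a b
  have h2 : (Cayley n).edist a b ≤ (Cayley n).edist (w * a) (w * b) := by
    have := edist_hom (cayleyMulIso n w⁻¹).toHom (w * a) (w * b)
    simpa [cayleyMulIso, mul_assoc] using this
  unfold SimpleGraph.dist
  rw [le_antisymm h1 h2]

lemma cayley_hull_mul (n : ℕ) (w : FreeGroup (Fin n)) (S : Set (FreeGroup (Fin n))) :
    cayleyHull n ((w * ·) '' S) = (w * ·) '' cayleyHull n S := by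
  ext v
  constructor
  · rintro ⟨a, ⟨a', ha', rfl⟩, b, ⟨b', hb', rfl⟩, hd⟩
    refine ⟨w⁻¹ * v, ⟨a', ha', b', hb', ?_⟩, by group⟩
    have e1 : (Cayley n).dist (w * a') v = (Cayley n).dist a' (w⁻¹ * v) := by
      rw [← cayley_dist_mul n w a' (w⁻¹ * v)]; group
    have e2 : (Cayley n).dist v (w * b') = (Cayley n).dist (w⁻¹ * v) b' := by
      rw [← cayley_dist_mul n w (w⁻¹ * v) b']; group
    rw [← e1, ← e2, hd, cayley_dist_mul]
  · rintro ⟨v', ⟨a', ha', b', hb', hd⟩, rfl⟩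
    refine ⟨w * a', ⟨a', ha', rfl⟩, w * b', ⟨b', hb', rfl⟩, ?_⟩
    rw [cayley_dist_mul, cayley_dist_mul, cayley_dist_mul, hd]

lemma cayley_ecc_mul (n : ℕ) (w : FreeGroup (Fin n)) (S : Set (FreeGroup (Fin n)))
    (v : FreeGroup (Fin n)) :
    cayleyEcc n ((w * ·) '' S) (w * v) = cayleyEcc n S v := by
  unfold cayleyEcc
  rw [Set.image_image]
  congr 1
  exact Set.image_congr fun u _ => cayley_dist_mul n w v u

lemma cayley_bary_mul (n : ℕ) (w : FreeGroup (Fin n)) (S : Set (FreeGroup (Fin n))) :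
    cayleyBarycentre n ((w * ·) '' S) = (w * ·) '' cayleyBarycentre n S := by
  ext v
  constructor
  · rintro ⟨⟨v', hv', rfl⟩, hmin⟩
    refine ⟨v', ⟨hv', fun u hu => ?_⟩, rfl⟩
    have := hmin (w * u) ⟨u, hu, rfl⟩
    rwa [cayley_ecc_mul, cayley_ecc_mul] at this
  · rintro ⟨v', ⟨hv', hmin⟩, rfl⟩
    refine ⟨⟨v', hv', rfl⟩, ?_⟩
    rintro _ ⟨u, hu, rfl⟩
    rw [cayley_ecc_mul, cayley_ecc_mul]
    exact hmin u hu

lemma freeGroup_of_mul_of_ne_one (n : ℕ) (i j : Fin n) :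
    FreeGroup.of j * FreeGroup.of i ≠ (1 : FreeGroup (Fin n)) := by
  intro h
  have := congrArg (FreeGroup.lift (fun _ : Fin n => Multiplicative.ofAdd (1 : ℤ))) h
  simp only [map_mul, FreeGroup.lift_apply_of, map_one] at this
  have h2 : (1 : ℤ) + 1 = 0 := by
    have := congrArg Multiplicative.toAdd this
    simpa using this
  omega

lemma freeGroup_of_ne_one (n : ℕ) (i : Fin n) :
    FreeGroup.of i ≠ (1 : FreeGroup (Fin n)) := by
  intro h
  have := congrArg (FreeGroup.lift (fun _ : Fin n => Multiplicative.ofAdd (1 : ℤ))) h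
  simp only [FreeGroup.lift_apply_of, map_one] at this
  have h2 : (1 : ℤ) = 0 := by
    have := congrArg Multiplicative.toAdd this
    simpa using this
  omega

/-- Two distinct finitely supported maps `f, g : F_n → F` whose supports have
admissible convex hulls (barycentre at the vertex `e` or at an edge `[e, aᵢ]`)
lie in distinct orbits of the left-translation action of `F_n`. -/
theorem distinct_admissible_maps_in_distinct_orbits
    (n : ℕ) (F : Type) [Finite F] (p : F)
    (f g : FreeGroup (Fin n) → F)
    (hf : {x | f x ≠ p}.Finite) (hg : {x | g x ≠ p}.Finite)
    (hadf : cayleyBarycentre n (cayleyHull n {x | f x ≠ p}) = {1} ∨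
      ∃ i : Fin n,
        cayleyBarycentre n (cayleyHull n {x | f x ≠ p}) = {1, FreeGroup.of i})
    (hadg : cayleyBarycentre n (cayleyHull n {x | g x ≠ p}) = {1} ∨
      ∃ i : Fin n,
        cayleyBarycentre n (cayleyHull n {x | g x ≠ p}) = {1, FreeGroup.of i})
    (hfg : f ≠ g) :
    ∀ w : FreeGroup (Fin n), (fun x => f (w⁻¹ * x)) ≠ g := by
  intro w h
  -- support of g is the translate of support of f
  have hsupp : {x | g x ≠ p} = (w * ·) '' {x | f x ≠ p} := by
    ext x
    constructor
    · intro hx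
      refine ⟨w⁻¹ * x, ?_, by group⟩
      have := congrFun h x
      simp only [Set.mem_setOf_eq] at hx ⊢
      rw [this]
      exact hx
    · rintro ⟨y, hy, rfl⟩
      have := congrFun h (w * y)
      simp only [inv_mul_cancel_left] at this
      simpa [Set.mem_setOf_eq, this] using hy
  have hbary : cayleyBarycentre n (cayleyHull n {x | g x ≠ p})
      = (w * ·) '' cayleyBarycentre n (cayleyHull n {x | f x ≠ p}) := by
    rw [hsupp, cayley_hull_mul, cayley_bary_mul]
  -- deduce w = 1
  have hw : w = 1 := by
    rcases hadf with hf1 | ⟨i, hfi⟩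
    · rw [hf1, Set.image_singleton, mul_one] at hbary
      rcases hadg with hg1 | ⟨j, hgj⟩
      · rw [hg1] at hbary
        exact (Set.singleton_eq_singleton_iff.mp hbary).symm
      · rw [hgj] at hbary
        have h1 : FreeGroup.of j ∈ ({w} : Set (FreeGroup (Fin n))) := by
          rw [← hbary]; exact Set.mem_insert_iff.mpr (Or.inr rfl)
        have h0 : (1 : FreeGroup (Fin n)) ∈ ({w} : Set (FreeGroup (Fin n))) := by
          rw [← hbary]; exact Set.mem_insert _ _
        rw [Set.mem_singleton_iff] at h1 h0
        exact absurd (h1.trans h0.symm) (freeGroup_of_ne_one n j)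
    · rw [hfi, Set.image_pair, mul_one] at hbary
      rcases hadg with hg1 | ⟨j, hgj⟩
      · rw [hg1] at hbary
        have h0 : w ∈ ({1} : Set (FreeGroup (Fin n))) := by
          rw [hbary]; exact Set.mem_insert _ _
        have h1 : w * FreeGroup.of i ∈ ({1} : Set (FreeGroup (Fin n))) := by
          rw [hbary]; exact Set.mem_insert_iff.mpr (Or.inr rfl)
        rw [Set.mem_singleton_iff] at h0 h1
        rw [h0, one_mul] at h1
        exact absurd h1 (freeGroup_of_ne_one n i)
      · rw [hgj] at hbary
        have h0 : w ∈ ({1, FreeGroup.of j} : Set (FreeGroup (Fin n))) := by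
          rw [hbary]; exact Set.mem_insert _ _
        rcases h0 with h0 | h0
        · exact h0
        · -- w = of j ; then w * of i ∈ {1, of j}
          have h1 : w * FreeGroup.of i ∈ ({1, FreeGroup.of j} : Set (FreeGroup (Fin n))) := by
            rw [hbary]; exact Set.mem_insert_iff.mpr (Or.inr rfl)
          rw [Set.mem_singleton_iff] at h0
          rcases h1 with h1 | h1
          · rw [h0] at h1
            exact absurd h1 (freeGroup_of_mul_of_ne_one n i j)
          · rw [Set.mem_singleton_iff, h0] at h1
            have : FreeGroup.of i = (1 : FreeGroup (Fin n)) := by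
              have := mul_left_cancel ((mul_one (FreeGroup.of j)).symm ▸ h1)
              exact this
            exact absurd this (freeGroup_of_ne_one n i)
  apply hfg
  funext x
  have := congrFun h x
  rw [hw] at this
  simpa using this
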